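/- Let R : ℝ → SO(3) satisfy Ṙ = R Ω̂ for a curve Ω : ℝ → ℝ³, and let R_d : ℝ → SO(3) satisfy Ṙ_d = R_d Ω̂_d. Define e_Ω = Ω − Rᵀ R_d Ω_d and e_R = ½(R_dᵀ R − Rᵀ R_d)^∨. Then the time derivative of Ψ(R, R_d) = ½ tr(I − R_dᵀ R) satisfies d/dt Ψ(R, R_d) = e_R · e_Ω. -/

import Mathlib

open Matrix
open scoped Matrix

noncomputable section

attribute [local instance] Matrix.normedAddCommGroup Matrix.normedSpace

/-- The hat map `ℝ³ → so(3)`, sending `x` to the skew matrix with `hat x *ᵥ y = x ×₃ y`. -/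
def hat (x : Fin 3 → ℝ) : Matrix (Fin 3) (Fin 3) ℝ :=
  !![0, -x 2, x 1; x 2, 0, -x 0; -x 1, x 0, 0]

/-- The vee map, inverse of the hat map on skew-symmetric matrices. -/
def vee (S : Matrix (Fin 3) (Fin 3) ℝ) : Fin 3 → ℝ := ![S 2 1, S 0 2, S 1 0]

/-- `SO(3)`: rotation matrices. -/
def SO3 : Set (Matrix (Fin 3) (Fin 3) ℝ) := {R | Rᵀ * R = 1 ∧ R.det = 1}

/-- Euclidean inner product on `ℝ³`. -/
def dot (x y : Fin 3 → ℝ) : ℝ := ∑ i, x i * y i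

/-- Euclidean norm on `ℝ³`. -/
def norm3 (x : Fin 3 → ℝ) : ℝ := Real.sqrt (dot x x)

/-- Attitude error function on `SO(3) × SO(3)`. -/
def Psi (R Rd : Matrix (Fin 3) (Fin 3) ℝ) : ℝ := (1/2 : ℝ) * (1 - Rdᵀ * R).trace

/-- Attitude error vector. -/
def eR (R Rd : Matrix (Fin 3) (Fin 3) ℝ) : Fin 3 → ℝ := (1/2 : ℝ) • vee (Rdᵀ * R - Rᵀ * Rd)

lemma alg_aux (A B : Matrix (Fin 3) (Fin 3) ℝ) (w wd : Fin 3 → ℝ)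
    (hadj : adjugate (Bᵀ * A) = (Bᵀ * A)ᵀ) :
    dot (eR A B) (w - (Aᵀ * B) *ᵥ wd)
      = 1/2 * (-(∑ i, ∑ j, ((B * hat wd) j i * A j i + B j i * (A * hat w) j i))) := by
  rw [adjugate_fin_three] at hadj
  have h12 := congrFun (congrFun hadj 1) 2
  have h21 := congrFun (congrFun hadj 2) 1
  have h20 := congrFun (congrFun hadj 2) 0
  have h02 := congrFun (congrFun hadj 0) 2
  have h01 := congrFun (congrFun hadj 0) 1
  have h10 := congrFun (congrFun hadj 1) 0
  simp only [Matrix.mul_apply, Matrix.transpose_apply, Fin.sum_univ_three,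
    Matrix.cons_val', Matrix.cons_val_zero, Matrix.cons_val_one, Matrix.head_cons,
    Matrix.empty_val', Matrix.cons_val_fin_one, Matrix.head_fin_const,
    Matrix.cons_val_two, Matrix.tail_cons, Matrix.of_apply] at h12 h21 h20 h02 h01 h10 ⊢
  simp only [dot, eR, vee, hat, Matrix.mulVec, dotProduct, Pi.sub_apply, Pi.smul_apply,
    smul_eq_mul, Matrix.mul_apply, Matrix.transpose_apply, Matrix.sub_apply, Fin.sum_univ_three,
    Matrix.cons_val', Matrix.cons_val_zero, Matrix.cons_val_one, Matrix.head_cons,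
    Matrix.empty_val', Matrix.cons_val_fin_one, Matrix.cons_val_two, Matrix.tail_cons,
    Matrix.of_apply, Matrix.vecHead, Matrix.vecTail, Function.comp, Matrix.cons_val_succ]
  linear_combination (-(1/2) * wd 0) * h12 + (1/2 * wd 0) * h21 + (-(1/2) * wd 1) * h20 +
    (1/2 * wd 1) * h02 + (-(1/2) * wd 2) * h01 + (1/2 * wd 2) * h10

/-- `d/dt Ψ(R,R_d) = e_R · e_Ω` along the attitude kinematics. -/
theorem psi_deriv (R Rd : ℝ → Matrix (Fin 3) (Fin 3) ℝ) (Ω Ωd : ℝ → Fin 3 → ℝ) (t : ℝ)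
    (hR : ∀ s, R s ∈ SO3) (hRd : ∀ s, Rd s ∈ SO3)
    (hdR : ∀ s, HasDerivAt R (R s * hat (Ω s)) s)
    (hdRd : ∀ s, HasDerivAt Rd (Rd s * hat (Ωd s)) s) :
    HasDerivAt (fun s => Psi (R s) (Rd s))
      (dot (eR (R t) (Rd t)) (Ω t - ((R t)ᵀ * Rd t) *ᵥ Ωd t)) t := by
  have hA : ∀ i j, HasDerivAt (fun u => R u i j) ((R t * hat (Ω t)) i j) t := fun i j =>
    hasDerivAt_pi.mp (hasDerivAt_pi.mp (hdR t) i) j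
  have hB : ∀ i j, HasDerivAt (fun u => Rd u i j) ((Rd t * hat (Ωd t)) i j) t := fun i j =>
    hasDerivAt_pi.mp (hasDerivAt_pi.mp (hdRd t) i) j
  have hg : HasDerivAt (fun s => ∑ i : Fin 3, ∑ j : Fin 3, Rd s j i * R s j i)
      (∑ i : Fin 3, ∑ j : Fin 3,
        ((Rd t * hat (Ωd t)) j i * R t j i + Rd t j i * (R t * hat (Ω t)) j i)) t := by
    refine HasDerivAt.fun_sum fun i _ => HasDerivAt.fun_sum fun j _ => ?_
    exact (hB j i).mul (hA j i)
  have hfun : (fun s => Psi (R s) (Rd s))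
      = fun s => (1/2 : ℝ) * (3 - ∑ i : Fin 3, ∑ j : Fin 3, Rd s j i * R s j i) := by
    funext s
    simp only [Psi, Matrix.trace, Matrix.diag, Matrix.sub_apply, Matrix.one_apply,
      Matrix.mul_apply, Matrix.transpose_apply, Fin.sum_univ_three]
    norm_num
    ring
  have hBBt : Rd t * (Rd t)ᵀ = 1 := mul_eq_one_comm.mp (hRd t).1
  have hQo : ((Rd t)ᵀ * R t)ᵀ * ((Rd t)ᵀ * R t) = 1 := by
    rw [Matrix.transpose_mul, Matrix.transpose_transpose, Matrix.mul_assoc,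
      ← Matrix.mul_assoc (Rd t), hBBt, Matrix.one_mul, (hR t).1]
  have hQd : ((Rd t)ᵀ * R t).det = 1 := by
    rw [Matrix.det_mul, Matrix.det_transpose, (hRd t).2, (hR t).2, one_mul]
  have hadj : adjugate ((Rd t)ᵀ * R t) = ((Rd t)ᵀ * R t)ᵀ := by
    calc adjugate ((Rd t)ᵀ * R t)
        = (((Rd t)ᵀ * R t)ᵀ * ((Rd t)ᵀ * R t)) * adjugate ((Rd t)ᵀ * R t) := by
          rw [hQo, Matrix.one_mul]
      _ = ((Rd t)ᵀ * R t)ᵀ * (((Rd t)ᵀ * R t) * adjugate ((Rd t)ᵀ * R t)) := by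
          rw [Matrix.mul_assoc]
      _ = ((Rd t)ᵀ * R t)ᵀ := by rw [Matrix.mul_adjugate, hQd, one_smul, Matrix.mul_one]
  have key := alg_aux (R t) (Rd t) (Ω t) (Ωd t) hadj
  rw [hfun, key]
  exact (hg.const_sub 3).const_mul (1/2 : ℝ)
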